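/- Let $r\ge0$, $\mu,\sigma,\rho,\delta>0$, let $\lambda<0$ be the negative root of $\frac{\mu^2}{2\sigma^2}x^2-(\frac{\mu^2}{2\sigma^2}+r+\rho-\delta)x-\delta=0$, and let $y_0>0$, $\phi_0>0$, and $K\in\mathbb{R}$ be constants. Then the function $u(y):=\frac{y_0-\phi_0}{\rho\lambda}\big(\frac{y}{y_0}\big)^{\lambda}+\frac{K}{\delta}$, $y>0$, satisfies the linear ODE $\frac{\mu^2}{2\sigma^2}y^2u''(y)+(\delta-r-\rho)\,y\,u'(y)-\delta u(y)+K=0$ for all $y>0$, together with the boundary conditions $y_0-\rho y_0 u'(y_0)=\phi_0$ and $\lim_{y\to+\infty}u'(y)=\lim_{y\to+\infty}y\,u''(y)=0$. -/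

import Mathlib

open Filter Set Topology

/-- the function `u(y) = (y₀-φ₀)/(ρλ) (y/y₀)^λ + K/δ` solves the linear Euler ODE
`μ²/(2σ²) y² u'' + (δ-r-ρ) y u' - δ u + K = 0` on `(0,∞)`, with the boundary conditions
`y₀ - ρ y₀ u'(y₀) = φ₀` and `u'(y) → 0`, `y u''(y) → 0` as `y → +∞`. -/
theorem euler_ode_solution (r μ σ ρ δ y₀ φ₀ K lam : ℝ)
    (hr : 0 ≤ r) (hμ : 0 < μ) (hσ : 0 < σ) (hρ : 0 < ρ) (hδ : 0 < δ)
    (hy₀ : 0 < y₀) (hφ₀ : 0 < φ₀) (hlam : lam < 0)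
    (hroot : μ ^ 2 / (2 * σ ^ 2) * lam ^ 2 - (μ ^ 2 / (2 * σ ^ 2) + r + ρ - δ) * lam - δ = 0)
    (u : ℝ → ℝ) (hu : ∀ y, 0 < y → u y = (y₀ - φ₀) / (ρ * lam) * (y / y₀) ^ lam + K / δ) :
    (∀ y, 0 < y →
      μ ^ 2 / (2 * σ ^ 2) * y ^ 2 * deriv (deriv u) y + (δ - r - ρ) * y * deriv u y
        - δ * u y + K = 0) ∧
    y₀ - ρ * y₀ * deriv u y₀ = φ₀ ∧
    Filter.Tendsto (deriv u) Filter.atTop (nhds 0) ∧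
    Filter.Tendsto (fun y => y * deriv (deriv u) y) Filter.atTop (nhds 0) := by
  set C := (y₀ - φ₀) / (ρ * lam) with hC
  -- first derivative
  have hD : ∀ y, 0 < y → HasDerivAt u (C * lam / y₀ * (y / y₀) ^ (lam - 1)) y := by
    intro y hy
    have ht : 0 < y / y₀ := div_pos hy hy₀
    have h1 : HasDerivAt (fun z : ℝ => z / y₀) (1 / y₀) y := by
      simpa using (hasDerivAt_id y).div_const y₀
    have h2 : HasDerivAt (fun z : ℝ => (z / y₀) ^ lam)
        (lam * (y / y₀) ^ (lam - 1) * (1 / y₀)) y :=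
      by have := (Real.hasDerivAt_rpow_const (p := lam) (x := y / y₀) (Or.inl ht.ne')).comp y h1; exact this
    have h3 : HasDerivAt (fun z : ℝ => C * (z / y₀) ^ lam + K / δ)
        (C * (lam * (y / y₀) ^ (lam - 1) * (1 / y₀))) y := (h2.const_mul C).add_const _
    have heq : u =ᶠ[nhds y] fun z : ℝ => C * (z / y₀) ^ lam + K / δ :=
      eventually_of_mem (isOpen_Ioi.mem_nhds hy) fun z hz => hu z hz
    have := h3.congr_of_eventuallyEq heq
    refine this.congr_deriv ?_; ring
  have hd1 : ∀ y, 0 < y → deriv u y = C * lam / y₀ * (y / y₀) ^ (lam - 1) :=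
    fun y hy => (hD y hy).deriv
  -- second derivative
  have hD2 : ∀ y, 0 < y →
      HasDerivAt (deriv u) (C * lam * (lam - 1) / y₀ ^ 2 * (y / y₀) ^ (lam - 2)) y := by
    intro y hy
    have ht : 0 < y / y₀ := div_pos hy hy₀
    have h1 : HasDerivAt (fun z : ℝ => z / y₀) (1 / y₀) y := by
      simpa using (hasDerivAt_id y).div_const y₀
    have h2 : HasDerivAt (fun z : ℝ => (z / y₀) ^ (lam - 1))
        ((lam - 1) * (y / y₀) ^ (lam - 1 - 1) * (1 / y₀)) y :=
      by have := (Real.hasDerivAt_rpow_const (p := lam - 1) (x := y / y₀) (Or.inl ht.ne')).comp y h1; exact this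
    have h3 : HasDerivAt (fun z : ℝ => C * lam / y₀ * (z / y₀) ^ (lam - 1))
        (C * lam / y₀ * ((lam - 1) * (y / y₀) ^ (lam - 1 - 1) * (1 / y₀))) y :=
      h2.const_mul _
    have heq : deriv u =ᶠ[nhds y] fun z : ℝ => C * lam / y₀ * (z / y₀) ^ (lam - 1) :=
      eventually_of_mem (isOpen_Ioi.mem_nhds hy) fun z hz => hd1 z hz
    have := h3.congr_of_eventuallyEq heq
    refine this.congr_deriv ?_
    rw [show lam - 1 - 1 = lam - 2 by ring]; ring
  have hd2 : ∀ y, 0 < y →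
      deriv (deriv u) y = C * lam * (lam - 1) / y₀ ^ 2 * (y / y₀) ^ (lam - 2) :=
    fun y hy => (hD2 y hy).deriv
  refine ⟨?_, ?_, ?_, ?_⟩
  · intro y hy
    have ht : 0 < y / y₀ := div_pos hy hy₀
    rw [hd1 y hy, hd2 y hy, hu y hy]
    have hy' : y ≠ 0 := hy.ne'
    have hy₀' : y₀ ≠ 0 := hy₀.ne'
    have e2n : (y / y₀) ^ (2 : ℝ) = (y / y₀) ^ (2 : ℕ) := by
      rw [← Real.rpow_natCast]; norm_num
    have hA : y ^ 2 * (C * lam * (lam - 1) / y₀ ^ 2 * (y / y₀) ^ (lam - 2))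
        = C * lam * (lam - 1) * (y / y₀) ^ lam := by
      rw [Real.rpow_sub ht, e2n]; field_simp
    have hB : y * (C * lam / y₀ * (y / y₀) ^ (lam - 1))
        = C * lam * (y / y₀) ^ lam := by
      rw [Real.rpow_sub ht, Real.rpow_one]; field_simp
    have hK : δ * (K / δ) = K := by field_simp
    linear_combination (C * (y / y₀) ^ lam) * hroot + (μ ^ 2 / (2 * σ ^ 2)) * hA
      + (δ - r - ρ) * hB - hK
  · rw [hd1 y₀ hy₀, div_self hy₀.ne', Real.one_rpow]
    have : ρ * lam ≠ 0 := mul_ne_zero hρ.ne' hlam.ne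
    rw [hC]
    field_simp
    simp [hlam.ne]
  · apply Tendsto.congr' (f₁ := fun y => C * lam / y₀ * (y / y₀) ^ (lam - 1))
    · filter_upwards [eventually_gt_atTop 0] with y hy using (hd1 y hy).symm
    · have hbase : Tendsto (fun y : ℝ => y / y₀) atTop atTop :=
        tendsto_id.atTop_div_const hy₀
      have hp : Tendsto (fun t : ℝ => t ^ (lam - 1)) atTop (nhds 0) := by
        simpa using tendsto_rpow_neg_atTop (y := 1 - lam) (by linarith)
      have := (hp.comp hbase).const_mul (C * lam / y₀)
      simpa using this
  · apply Tendsto.congr' (f₁ := fun y => C * lam * (lam - 1) / y₀ * (y / y₀) ^ (lam - 1))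
    · filter_upwards [eventually_gt_atTop 0] with y hy
      rw [hd2 y hy]
      have ht : 0 < y / y₀ := div_pos hy hy₀
      have e1 : (y / y₀) ^ (lam - 1) = (y / y₀) ^ (lam - 2) * (y / y₀) := by
        rw [← Real.rpow_add_one ht.ne']; ring_nf
      rw [e1]; field_simp
    · have hbase : Tendsto (fun y : ℝ => y / y₀) atTop atTop :=
        tendsto_id.atTop_div_const hy₀
      have hp : Tendsto (fun t : ℝ => t ^ (lam - 1)) atTop (nhds 0) := by
        simpa using tendsto_rpow_neg_atTop (y := 1 - lam) (by linarith)
      have := (hp.comp hbase).const_mul (C * lam * (lam - 1) / y₀)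
      simpa using this
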